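/- Let V : [1,∞) → (0,∞) be continuous, and suppose there are constants b > 0, C > 0 and r₀ ≥ 1 such that b ≤ ∫₁^r s/V(s) ds ≤ C·r²/V(r) for all r ≥ r₀. Then there exist a constant C' > 0 and r₁ ≥ 1 such that (log r)² ≤ C'·r²/V(r) for all r ≥ r₁. -/

import Mathlib

open MeasureTheory Filter

/-- If `b ≤ ∫₁^r s/V(s) ds ≤ C r²/V(r)` for all large `r`, then
`(log r)² ≤ C' r²/V(r)` for all large `r`. -/
theorem stmt_2 (V : ℝ → ℝ)
    (hVpos : ∀ r ∈ Set.Ici (1:ℝ), 0 < V r)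
    (hVcont : ContinuousOn V (Set.Ici (1:ℝ)))
    (b C r₀ : ℝ) (hb : 0 < b) (hC : 0 < C) (hr₀ : 1 ≤ r₀)
    (h : ∀ r ≥ r₀, b ≤ (∫ s in (1:ℝ)..r, s / V s) ∧
        (∫ s in (1:ℝ)..r, s / V s) ≤ C * r ^ 2 / V r) :
    ∃ C' > (0:ℝ), ∃ r₁ ≥ (1:ℝ), ∀ r ≥ r₁, (Real.log r) ^ 2 ≤ C' * r ^ 2 / V r := by
  set f : ℝ → ℝ := fun s => s / V s with hfdef
  have hfc : ContinuousOn f (Set.Ici 1) :=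
    continuousOn_id.div hVcont (fun x hx => (hVpos x hx).ne')
  have hint : ∀ a r : ℝ, 1 ≤ a → a ≤ r → IntervalIntegrable f volume a r := by
    intro a r ha har
    apply (hfc.mono ?_).intervalIntegrable
    rw [Set.uIcc_of_le har]
    exact Set.Icc_subset_Ici_self.trans (Set.Ici_subset_Ici.2 ha)
  have hsplit : ∀ s : ℝ, r₀ ≤ s →
      (∫ t in (1:ℝ)..s, f t) = (∫ t in (1:ℝ)..r₀, f t) + ∫ t in r₀..s, f t := by
    intro s hs
    rw [intervalIntegral.integral_add_adjacent_intervals (hint 1 r₀ le_rfl hr₀)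
      (hint r₀ s hr₀ hs)]
  -- pointwise: for t ≥ r₀, (∫₁^t f)/(C t) ≤ f t
  have hlow : ∀ t : ℝ, r₀ ≤ t → (∫ s in (1:ℝ)..t, f s) / (C * t) ≤ f t := by
    intro t ht
    have ht1 : (1:ℝ) ≤ t := hr₀.trans ht
    have ht0 : (0:ℝ) < t := lt_of_lt_of_le one_pos ht1
    have hV : 0 < V t := hVpos t ht1
    have h2 := (h t ht).2
    have hCt : 0 < C * t := mul_pos hC ht0
    have : (∫ s in (1:ℝ)..t, f s) / (C * t) ≤ (C * t ^ 2 / V t) / (C * t) :=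
      div_le_div_of_nonneg_right h2 hCt.le |>.trans_eq rfl
    calc (∫ s in (1:ℝ)..t, f s) / (C * t) ≤ (C * t ^ 2 / V t) / (C * t) :=
          div_le_div_of_nonneg_right h2 hCt.le
      _ = f t := by rw [hfdef]; field_simp
  -- step 1
  have step1 : ∀ s : ℝ, r₀ ≤ s →
      b + (b / C) * (Real.log s - Real.log r₀) ≤ ∫ t in (1:ℝ)..s, f t := by
    intro s hs
    have hr₀0 : (0:ℝ) < r₀ := lt_of_lt_of_le one_pos hr₀
    have hlog : (∫ t in r₀..s, (b / C) * t⁻¹) =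
        (b / C) * Real.log s - (b / C) * Real.log r₀ := by
      have : ∀ t ∈ Set.uIcc r₀ s, HasDerivAt (fun x => (b / C) * Real.log x)
          ((b / C) * t⁻¹) t := by
        intro t htt
        rw [Set.uIcc_of_le hs] at htt
        exact (Real.hasDerivAt_log (lt_of_lt_of_le hr₀0 htt.1).ne').const_mul _
      rw [intervalIntegral.integral_eq_sub_of_hasDerivAt this]
      · exact IntervalIntegrable.const_mul (by
          apply ContinuousOn.intervalIntegrable
          apply ContinuousOn.inv₀ continuousOn_id
          intro t htt
          rw [Set.uIcc_of_le hs] at htt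
          exact (lt_of_lt_of_le hr₀0 htt.1).ne') _
    have hmono : (∫ t in r₀..s, (b / C) * t⁻¹) ≤ ∫ t in r₀..s, f t := by
      apply intervalIntegral.integral_mono_on hs
      · exact IntervalIntegrable.const_mul (by
          apply ContinuousOn.intervalIntegrable
          apply ContinuousOn.inv₀ continuousOn_id
          intro t htt
          rw [Set.uIcc_of_le hs] at htt
          exact (lt_of_lt_of_le hr₀0 htt.1).ne') _
      · exact hint r₀ s hr₀ hs
      · intro t htt
        have ht0 : (0:ℝ) < t := lt_of_lt_of_le hr₀0 htt.1
        have h1 := (h t htt.1).1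
        have : b / (C * t) ≤ (∫ u in (1:ℝ)..t, f u) / (C * t) :=
          div_le_div_of_nonneg_right h1 (mul_pos hC ht0).le
        calc (b / C) * t⁻¹ = b / (C * t) := by field_simp
          _ ≤ (∫ u in (1:ℝ)..t, f u) / (C * t) := this
          _ ≤ f t := hlow t htt.1
    have hb0 := (h r₀ le_rfl).1
    rw [hsplit s hs]
    have : (b / C) * (Real.log s - Real.log r₀) ≤ ∫ t in r₀..s, f t := by
      rw [mul_sub]; linarith [hlog ▸ hmono]
    linarith
  -- step 2
  have step2 : ∀ r : ℝ, r₀ ≤ r →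
      b + (b / (2 * C ^ 2)) * (Real.log r - Real.log r₀) ^ 2 ≤ ∫ t in (1:ℝ)..r, f t := by
    intro r hr
    have hr₀0 : (0:ℝ) < r₀ := lt_of_lt_of_le one_pos hr₀
    have hg_int : IntervalIntegrable (fun t => (b / C ^ 2) * ((Real.log t - Real.log r₀) * t⁻¹))
        volume r₀ r := by
      apply IntervalIntegrable.const_mul
      apply ContinuousOn.intervalIntegrable
      apply ContinuousOn.mul
      · exact (Real.continuousOn_log.mono (by
          intro t htt
          rw [Set.uIcc_of_le hr] at htt
          exact (lt_of_lt_of_le hr₀0 htt.1).ne')).sub continuousOn_const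
      · apply ContinuousOn.inv₀ continuousOn_id
        intro t htt
        rw [Set.uIcc_of_le hr] at htt
        exact (lt_of_lt_of_le hr₀0 htt.1).ne'
    have hcalc : (∫ t in r₀..r, (b / C ^ 2) * ((Real.log t - Real.log r₀) * t⁻¹)) =
        (b / (2 * C ^ 2)) * (Real.log r - Real.log r₀) ^ 2 := by
      have hderiv : ∀ t ∈ Set.uIcc r₀ r, HasDerivAt
          (fun x => (b / (2 * C ^ 2)) * (Real.log x - Real.log r₀) ^ 2)
          ((b / C ^ 2) * ((Real.log t - Real.log r₀) * t⁻¹)) t := by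
        intro t htt
        rw [Set.uIcc_of_le hr] at htt
        have ht0 : (0:ℝ) < t := lt_of_lt_of_le hr₀0 htt.1
        have h1 : HasDerivAt (fun x => (Real.log x - Real.log r₀)) t⁻¹ t :=
          (Real.hasDerivAt_log ht0.ne').sub_const _
        have h2 := (h1.pow 2).const_mul (b / (2 * C ^ 2))
        exact h2.congr_deriv (by norm_num; ring)
      rw [intervalIntegral.integral_eq_sub_of_hasDerivAt hderiv hg_int]
      simp
    have hmono : (∫ t in r₀..r, (b / C ^ 2) * ((Real.log t - Real.log r₀) * t⁻¹)) ≤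
        ∫ t in r₀..r, f t := by
      apply intervalIntegral.integral_mono_on hr hg_int (hint r₀ r hr₀ hr)
      intro t htt
      have ht0 : (0:ℝ) < t := lt_of_lt_of_le hr₀0 htt.1
      have hlogt : 0 ≤ Real.log t - Real.log r₀ :=
        sub_nonneg.2 (Real.log_le_log hr₀0 htt.1)
      have hs1 := step1 t htt.1
      have key : (b / C) * (Real.log t - Real.log r₀) ≤ ∫ u in (1:ℝ)..t, f u := by
        linarith
      have : ((b / C) * (Real.log t - Real.log r₀)) / (C * t) ≤
          (∫ u in (1:ℝ)..t, f u) / (C * t) :=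
        div_le_div_of_nonneg_right key (mul_pos hC ht0).le
      calc (b / C ^ 2) * ((Real.log t - Real.log r₀) * t⁻¹)
          = ((b / C) * (Real.log t - Real.log r₀)) / (C * t) := by
            rw [eq_div_iff (mul_pos hC ht0).ne']
            field_simp
        _ ≤ (∫ u in (1:ℝ)..t, f u) / (C * t) := this
        _ ≤ f t := hlow t htt.1
    have hb0 := (h r₀ le_rfl).1
    rw [hsplit r hr]
    linarith [hcalc ▸ hmono]
  -- conclusion
  refine ⟨8 * C ^ 3 / b, by positivity, r₀ ^ 2, by nlinarith, ?_⟩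
  intro r hr
  have hr₀0 : (0:ℝ) < r₀ := lt_of_lt_of_le one_pos hr₀
  have hrr₀ : r₀ ≤ r := le_trans (le_self_pow₀ (by linarith) two_ne_zero) hr
  have hr1 : (1:ℝ) ≤ r := hr₀.trans hrr₀
  have hr0 : (0:ℝ) < r := lt_of_lt_of_le one_pos hr1
  have hlogr : 0 ≤ Real.log r := Real.log_nonneg hr1
  have hlog2 : 2 * Real.log r₀ ≤ Real.log r := by
    have := Real.log_le_log (by positivity) hr
    rwa [Real.log_pow, Nat.cast_ofNat] at this
  have hhalf : Real.log r / 2 ≤ Real.log r - Real.log r₀ := by linarith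
  have hsq : (Real.log r) ^ 2 ≤ 4 * (Real.log r - Real.log r₀) ^ 2 := by
    nlinarith [sq_nonneg (Real.log r - 2 * Real.log r₀)]
  have hs2 := step2 r hrr₀
  have h2 := (h r hrr₀).2
  have hV : 0 < V r := hVpos r hr1
  have hF : (Real.log r - Real.log r₀) ^ 2 ≤ (2 * C ^ 2 / b) * (∫ t in (1:ℝ)..r, f t) := by
    have h1 : (Real.log r - Real.log r₀) ^ 2 =
        (2 * C ^ 2 / b) * (b / (2 * C ^ 2) * (Real.log r - Real.log r₀) ^ 2) := by
      field_simp
    rw [h1]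
    exact mul_le_mul_of_nonneg_left (by linarith) (by positivity)
  have : (Real.log r) ^ 2 ≤ (8 * C ^ 2 / b) * (C * r ^ 2 / V r) := by
    calc (Real.log r) ^ 2 ≤ 4 * (Real.log r - Real.log r₀) ^ 2 := hsq
      _ ≤ 4 * ((2 * C ^ 2 / b) * (∫ t in (1:ℝ)..r, f t)) := by
          have := hF; nlinarith
      _ ≤ (8 * C ^ 2 / b) * (C * r ^ 2 / V r) := by
          have hpos : (0:ℝ) ≤ 8 * C ^ 2 / b := by positivity
          have := mul_le_mul_of_nonneg_left h2 hpos
          calc 4 * ((2 * C ^ 2 / b) * (∫ t in (1:ℝ)..r, f t))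
              = (8 * C ^ 2 / b) * (∫ t in (1:ℝ)..r, f t) := by ring
            _ ≤ (8 * C ^ 2 / b) * (C * r ^ 2 / V r) := this
  calc (Real.log r) ^ 2 ≤ (8 * C ^ 2 / b) * (C * r ^ 2 / V r) := this
    _ = 8 * C ^ 3 / b * r ^ 2 / V r := by field_simp
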